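/- If V^{φ₁}_{α₁,β₁,ψ₁} ≅ V^{φ₂}_{α₂,β₂,ψ₂} as Vir_B-modules, then ψ₁ = ψ₂. -/

import Mathlib

open Finsupp TensorProduct

noncomputable section

/-- Loop-Virasoro carrier: `Vir ⊗ B ≅ (⊕_{n∈ℤ} d_n ⊗ B) ⊕ (C ⊗ B)`. -/
abbrev LVir (B : Type*) [AddCommMonoid B] : Type _ := (ℤ →₀ B) × B

variable (B : Type*) [CommRing B] [Algebra ℂ B]

/-- `[d_m ⊗ a, d_n ⊗ b] = (n-m) d_{m+n} ⊗ ab + δ_{m,-n} ((m³-m)/12) C ⊗ ab`. -/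
def ldBracket (m n : ℤ) (a b : B) : LVir B :=
  (Finsupp.single (m + n) ((((n : ℂ) - (m : ℂ))) • (a * b)),
    (if m = -n then ((m : ℂ) ^ 3 - (m : ℂ)) / 12 else 0) • (a * b))

/-- The bracket of the loop-Virasoro algebra `Vir_B = Vir ⊗ B`; `C ⊗ B` is central. -/
def lvirBracket (x y : LVir B) : LVir B :=
  x.1.sum fun m a => y.1.sum fun n b => ldBracket B m n a b

/-- Action of `d_n` on `V_{α,β}` -/
def dAct (α β : ℂ) (n : ℤ) : Module.End ℂ (ℤ →₀ ℂ) :=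
  Finsupp.lsum ℂ fun k => (α + (k : ℂ) + (n : ℂ) * β) • Finsupp.lsingle (k + n)

/-- Action of `Vir_B` on `V_{α,β,ψ}`:  `(d_n ⊗ b) · v_k = ψ(b)(α + k + nβ) v_{k+n}`,
`(C ⊗ b) · v_k = 0`. -/
def lAction (α β : ℂ) (ψ : B →ₐ[ℂ] ℂ) : LVir B →ₗ[ℂ] Module.End ℂ (ℤ →₀ ℂ) :=
  (Finsupp.lsum ℂ fun n =>
      (LinearMap.toSpanSingleton ℂ (Module.End ℂ (ℤ →₀ ℂ)) (dAct α β n)).comp ψ.toLinearMap).comp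
    (LinearMap.fst ℂ (ℤ →₀ B) B)

def ActInvariant {L V : Type*} [AddCommGroup V] [Module ℂ V]
    (act : L → Module.End ℂ V) (U : Submodule ℂ V) : Prop :=
  ∀ x : L, ∀ v ∈ U, act x v ∈ U

def ActIrreducible {L V : Type*} [AddCommGroup V] [Module ℂ V]
    (act : L → Module.End ℂ V) : Prop :=
  ∀ U : Submodule ℂ V, ActInvariant act U → U = ⊥ ∨ U = ⊤

def ActGenerates {L V : Type*} [AddCommGroup V] [Module ℂ V]
    (act : L → Module.End ℂ V) (S : Set V) : Prop :=
  ∀ U : Submodule ℂ V, ActInvariant act U → S ⊆ U → U = ⊤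

/-- Data of the irreducible highest weight `Vir_B`-module `V(φ)` attached to a one-dimensional
representation `φ` of `Vir⁰_B` (given by its values `φd b = φ(d_0 ⊗ b)`, `φC b = φ(C ⊗ b)`),
with highest weight vector `hv = v_φ`. -/
structure HWRep (B : Type*) [CommRing B] [Algebra ℂ B]
    (W : Type*) [AddCommGroup W] [Module ℂ W] where
  ρ : LVir B →ₗ[ℂ] Module.End ℂ W
  rep : ∀ x y : LVir B, ρ (lvirBracket B x y) = ρ x * ρ y - ρ y * ρ x
  hv : W
  hv_ne : hv ≠ 0
  φd : B →ₗ[ℂ] ℂ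
  φC : B →ₗ[ℂ] ℂ
  hw : ∀ n : ℤ, 0 < n → ∀ b : B, ρ (Finsupp.single n b, 0) hv = 0
  wt0 : ∀ b : B, ρ (Finsupp.single 0 b, 0) hv = φd b • hv
  cen : ∀ b : B, ρ (0, b) hv = φC b • hv
  gen : ActGenerates (fun x => ρ x) {hv}
  irr : ActIrreducible (fun x => ρ x)

section Aux

lemma dAct_apply' (α β : ℂ) (n : ℤ) (v : ℤ →₀ ℂ) (k : ℤ) :
    dAct α β n v k = (α + ((k - n : ℤ) : ℂ) + (n : ℂ) * β) * v (k - n) := by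
  induction v using Finsupp.induction_linear with
  | zero => simp
  | add f g hf hg => simp [hf, hg]; ring
  | single j a =>
    simp only [dAct, Finsupp.lsum_single, LinearMap.smul_apply, Finsupp.lsingle_apply,
      Finsupp.smul_single, smul_eq_mul, Finsupp.single_apply]
    rcases eq_or_ne j (k - n) with h | h
    · subst h
      have h1 : (k - n) + n = k := by omega
      rw [if_pos h1, if_pos rfl]
    · have h1 : j + n ≠ k := by omega
      rw [if_neg h1, if_neg h, mul_zero]

lemma lAction_single (B : Type*) [CommRing B] [Algebra ℂ B]
    (α β : ℂ) (ψ : B →ₐ[ℂ] ℂ) (n : ℤ) (b : B) :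
    lAction B α β ψ (Finsupp.single n b, 0) = ψ b • dAct α β n := by
  rw [lAction]
  simp only [LinearMap.comp_apply, LinearMap.fst_apply]
  rw [Finsupp.lsum_single]
  simp [LinearMap.toSpanSingleton_apply]

lemma eL {W : Type*} [AddCommGroup W] [Module ℂ W]
    (ρop : Module.End ℂ W) (u : W ⊗[ℂ] (ℤ →₀ ℂ)) (k : ℤ) :
    TensorProduct.finsuppScalarRight ℂ ℂ W ℤ
        (TensorProduct.map ρop LinearMap.id u) k
      = ρop (TensorProduct.finsuppScalarRight ℂ ℂ W ℤ u k) := by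
  induction u using TensorProduct.induction_on with
  | zero => simp
  | tmul w v => simp [TensorProduct.finsuppScalarRight_apply_tmul_apply]
  | add x y hx hy => simp [hx, hy]

lemma eR {W : Type*} [AddCommGroup W] [Module ℂ W]
    (α β : ℂ) (n : ℤ) (u : W ⊗[ℂ] (ℤ →₀ ℂ)) (k : ℤ) :
    TensorProduct.finsuppScalarRight ℂ ℂ W ℤ
        (TensorProduct.map LinearMap.id (dAct α β n) u) k
      = (α + ((k - n : ℤ) : ℂ) + (n : ℂ) * β) •
          TensorProduct.finsuppScalarRight ℂ ℂ W ℤ u (k - n) := by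
  induction u using TensorProduct.induction_on with
  | zero => simp
  | tmul w v =>
      simp [TensorProduct.finsuppScalarRight_apply_tmul_apply, dAct_apply', mul_smul]
  | add x y hx hy => simp [hx, hy, smul_add]

end Aux

/-- The tensor product module `V^φ_{α,β,ψ} = V(φ) ⊗ V'_{α,β,ψ}`. -/
def tensAct {W : Type*} [AddCommGroup W] [Module ℂ W] (D : HWRep B W)
    (α β : ℂ) (ψ : B →ₐ[ℂ] ℂ) (x : LVir B) : Module.End ℂ (W ⊗[ℂ] (ℤ →₀ ℂ)) :=
  TensorProduct.map (D.ρ x) LinearMap.id + TensorProduct.map LinearMap.id (lAction B α β ψ x)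

/-- If `V^{φ₁}_{α₁,β₁,ψ₁} ≅ V^{φ₂}_{α₂,β₂,ψ₂}` as `Vir_B`-modules, then `ψ₁ = ψ₂`. -/
theorem iso_implies_psi_eq {W₁ W₂ : Type*} [AddCommGroup W₁] [Module ℂ W₁]
    [AddCommGroup W₂] [Module ℂ W₂]
    (D₁ : HWRep B W₁) (D₂ : HWRep B W₂) (α₁ β₁ α₂ β₂ : ℂ)
    (hα₁0 : 0 ≤ α₁.re) (hα₁1 : α₁.re < 1) (hβ₁ : β₁ ≠ 1)
    (hα₂0 : 0 ≤ α₂.re) (hα₂1 : α₂.re < 1) (hβ₂ : β₂ ≠ 1)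
    (ψ₁ ψ₂ : B →ₐ[ℂ] ℂ)
    (hirr₁ : ActIrreducible (fun x : LVir B => lAction B α₁ β₁ ψ₁ x))
    (hirr₂ : ActIrreducible (fun x : LVir B => lAction B α₂ β₂ ψ₂ x))
    (T : W₁ ⊗[ℂ] (ℤ →₀ ℂ) ≃ₗ[ℂ] W₂ ⊗[ℂ] (ℤ →₀ ℂ))
    (hT : ∀ (x : LVir B) (v : W₁ ⊗[ℂ] (ℤ →₀ ℂ)),
      T (tensAct B D₁ α₁ β₁ ψ₁ x v) = tensAct B D₂ α₂ β₂ ψ₂ x (T v)) :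
    ψ₁ = ψ₂ := by
  -- Step 0: irreducibility of the intermediate series module rules out `α₁ = β₁ = 0`.
  have hne : ¬ (α₁ = 0 ∧ β₁ = 0) := by
    rintro ⟨rfl, rfl⟩
    have h0 : ∀ x : LVir B, lAction B 0 0 ψ₁ x (Finsupp.single (0:ℤ) (1:ℂ)) = 0 := by
      intro x
      rw [lAction]
      simp only [LinearMap.comp_apply, LinearMap.fst_apply, Finsupp.lsum_apply]
      rw [Finsupp.sum, LinearMap.coe_sum, Finset.sum_apply]
      apply Finset.sum_eq_zero
      intro i _
      simp only [LinearMap.comp_apply, LinearMap.toSpanSingleton_apply, LinearMap.smul_apply]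
      have hd : dAct 0 0 i (Finsupp.single (0:ℤ) (1:ℂ)) = 0 := by
        ext k
        rw [dAct_apply']
        simp only [Finsupp.single_apply, Finsupp.coe_zero, Pi.zero_apply, zero_add, mul_zero,
          add_zero]
        by_cases h : (0:ℤ) = k - i
        · rw [if_pos h, ← h]
          norm_num
        · rw [if_neg h, mul_zero]
      rw [hd, smul_zero]
    have hinv : ActInvariant (fun x : LVir B => lAction B 0 0 ψ₁ x)
        (Submodule.span ℂ {Finsupp.single (0:ℤ) (1:ℂ)}) := by
      intro x v hv
      rw [Submodule.mem_span_singleton] at hv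
      obtain ⟨t, rfl⟩ := hv
      simp only [map_smul, LinearMap.smul_apply, h0 x, smul_zero]
      exact Submodule.zero_mem _
    rcases hirr₁ _ hinv with h | h
    · have hmem : Finsupp.single (0:ℤ) (1:ℂ) ∈ (⊥ : Submodule ℂ (ℤ →₀ ℂ)) :=
        h ▸ Submodule.mem_span_singleton_self _
      rw [Submodule.mem_bot] at hmem
      exact one_ne_zero (Finsupp.single_eq_zero.mp hmem)
    · have hmem : Finsupp.single (1:ℤ) (1:ℂ) ∈ Submodule.span ℂ {Finsupp.single (0:ℤ) (1:ℂ)} :=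
        h ▸ Submodule.mem_top
      rw [Submodule.mem_span_singleton] at hmem
      obtain ⟨t, ht⟩ := hmem
      have h1 : (t • (Finsupp.single (0:ℤ) (1:ℂ))) 1 = (Finsupp.single (1:ℤ) (1:ℂ)) 1 := by
        rw [ht]
      rw [Finsupp.smul_apply, Finsupp.single_eq_of_ne (by decide), Finsupp.single_eq_same,
        smul_zero] at h1
      exact one_ne_zero h1.symm
  -- Step 1: main argument
  have key : ∀ b : B, ψ₁ b = ψ₂ b := by
    intro b
    by_contra hb
    set c := ψ₁ b - ψ₂ b with hcdef
    have hc : c ≠ 0 := sub_ne_zero.mpr hb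
    set y : ℤ → LVir B := fun n => ((Finsupp.single n b, (0:B)) : LVir B)
        - ψ₂ b • ((Finsupp.single n (1:B), (0:B)) : LVir B) with hy
    have hρ₂ : ∀ n : ℤ, 0 < n → D₂.ρ (y n) D₂.hv = 0 := by
      intro n hn
      simp only [hy, map_sub, map_smul, LinearMap.sub_apply, LinearMap.smul_apply,
        D₂.hw n hn b, D₂.hw n hn 1, smul_zero, sub_zero]
    have hl₂ : ∀ n : ℤ, lAction B α₂ β₂ ψ₂ (y n) = 0 := by
      intro n
      show lAction B α₂ β₂ ψ₂
          (((Finsupp.single n b, (0:B)) : LVir B) - ψ₂ b • (Finsupp.single n (1:B), (0:B))) = 0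
      rw [map_sub, map_smul, lAction_single, lAction_single, map_one, one_smul, sub_self]
    have hl₁ : ∀ n : ℤ, lAction B α₁ β₁ ψ₁ (y n) = c • dAct α₁ β₁ n := by
      intro n
      show lAction B α₁ β₁ ψ₁
          (((Finsupp.single n b, (0:B)) : LVir B) - ψ₂ b • (Finsupp.single n (1:B), (0:B)))
        = c • dAct α₁ β₁ n
      rw [map_sub, map_smul, lAction_single, lAction_single, map_one, one_smul, hcdef]
      exact (sub_smul (ψ₁ b) (ψ₂ b) (dAct α₁ β₁ n)).symm
    set u := T.symm (D₂.hv ⊗ₜ[ℂ] Finsupp.single (0:ℤ) (1:ℂ)) with hu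
    have hAnu : ∀ n : ℤ, 0 < n → tensAct B D₁ α₁ β₁ ψ₁ (y n) u = 0 := by
      intro n hn
      apply T.injective
      rw [hT, map_zero, hu, T.apply_symm_apply, tensAct]
      simp only [LinearMap.add_apply, hl₂ n]
      rw [TensorProduct.map_tmul, TensorProduct.map_tmul]
      simp [hρ₂ n hn]
    set f := TensorProduct.finsuppScalarRight ℂ ℂ W₁ ℤ u with hfdef
    have hf : f ≠ 0 := by
      intro h0'
      have hu0 : u = 0 := by
        apply (TensorProduct.finsuppScalarRight ℂ ℂ W₁ ℤ).injective
        simpa [← hfdef] using h0'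
      have htv : (D₂.hv ⊗ₜ[ℂ] Finsupp.single (0:ℤ) (1:ℂ)) = 0 := by
        rw [← T.apply_symm_apply (D₂.hv ⊗ₜ[ℂ] Finsupp.single (0:ℤ) (1:ℂ)), ← hu, hu0, map_zero]
      have h2 := congrArg (fun t => TensorProduct.finsuppScalarRight ℂ ℂ W₂ ℤ t 0) htv
      simp only [TensorProduct.finsuppScalarRight_apply_tmul_apply, map_zero,
        Finsupp.single_eq_same, one_smul, Finsupp.coe_zero, Pi.zero_apply] at h2
      exact D₂.hv_ne h2
    have hrel : ∀ n : ℤ, 0 < n → ∀ k : ℤ,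
        D₁.ρ (y n) (f k) + (c * (α₁ + ((k - n : ℤ) : ℂ) + (n:ℂ) * β₁)) • f (k - n) = 0 := by
      intro n hn k
      have h := congrArg (fun t => TensorProduct.finsuppScalarRight ℂ ℂ W₁ ℤ t k) (hAnu n hn)
      simp only [tensAct, LinearMap.add_apply, hl₁ n, TensorProduct.map_smul_right,
        LinearMap.smul_apply, map_add, map_smul, Finsupp.add_apply, Finsupp.smul_apply,
        map_zero, Finsupp.coe_zero, Pi.zero_apply, eL, eR, ← hfdef] at h
      rw [smul_smul] at h
      exact h
    have hfs : f.support.Nonempty := Finsupp.support_nonempty_iff.mpr hf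
    set K := f.support.max' hfs with hK
    have hfK : f K ≠ 0 := Finsupp.mem_support_iff.mp (f.support.max'_mem hfs)
    have hcoef : ∀ n : ℤ, 0 < n → α₁ + (K:ℂ) + (n:ℂ) * β₁ = 0 := by
      intro n hn
      have h0' : f (K + n) = 0 := by
        by_contra hne0
        have hmem : K + n ∈ f.support := Finsupp.mem_support_iff.mpr hne0
        have := f.support.le_max' _ hmem
        omega
      have h := hrel n hn (K + n)
      have h2 : (K + n - n : ℤ) = K := by omega
      rw [h2, h0', map_zero, zero_add] at h
      rcases smul_eq_zero.mp h with h3 | h3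
      · rcases mul_eq_zero.mp h3 with h4 | h4
        · exact absurd h4 hc
        · exact h4
      · exact absurd h3 hfK
    have e1 := hcoef 1 one_pos
    have e2 := hcoef 2 two_pos
    push_cast at e1 e2
    have hb1 : β₁ = 0 := by linear_combination e2 - e1
    have ha1 : α₁ = -(K : ℂ) := by linear_combination e1 - hb1
    apply hne
    refine ⟨?_, hb1⟩
    have hre : α₁.re = -(K : ℝ) := by rw [ha1]; simp
    have hK0 : K = 0 := by
      have h1 : (0:ℝ) ≤ -(K:ℝ) := hre ▸ hα₁0
      have h2 : -(K:ℝ) < 1 := hre ▸ hα₁1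
      have h3 : (K:ℝ) ≤ 0 := by linarith
      have h4 : (-1:ℝ) < (K:ℝ) := by linarith
      have h5 : K ≤ 0 := by exact_mod_cast h3
      have h6 : (-1:ℤ) < K := by exact_mod_cast h4
      omega
    rw [ha1, hK0]
    norm_num
  exact DFunLike.ext ψ₁ ψ₂ key
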